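/- Fiberwise energy identity for the SAFT Zak transform: let f : ℝ → ℂ and t ∈ ℝ be such that Σ_{k∈ℤ} |f(t + k)| < ∞. Then ∫_0^Δ |Z_A f(t, ω)|² dω = Σ_{k∈ℤ} |f(t + k)|². -/

import Mathlib

open MeasureTheory Real

lemma orth_aux (n : ℤ) :
    (∫ θ in (0:ℝ)..(2*π), Complex.exp (Complex.I * (n:ℂ) * (θ:ℂ))) =
      if n = 0 then ((2*π : ℝ) : ℂ) else 0 := by
  rcases eq_or_ne n 0 with h | h
  · simp [h]
  · rw [if_neg h]
    have hc : (Complex.I * (n:ℂ)) ≠ 0 :=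
      mul_ne_zero Complex.I_ne_zero (by exact_mod_cast h)
    rw [integral_exp_mul_complex hc]
    have h1 : Complex.exp (Complex.I * (n:ℂ) * ((2*π : ℝ):ℂ)) = 1 := by
      rw [← Complex.exp_int_mul_two_pi_mul_I n]
      congr 1; push_cast; ring
    rw [h1]
    simp

lemma parseval_int (c : ℤ → ℂ) (hc : Summable fun k => ‖c k‖) :
    (∫ θ in (0:ℝ)..(2*π), ‖∑' k : ℤ, c k * Complex.exp (-(Complex.I * (k:ℂ) * (θ:ℂ)))‖^2)
      = 2*π * ∑' k : ℤ, ‖c k‖^2 := by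
  have h0 : (0:ℝ) ≤ 2*π := by positivity
  set F : ℤ → ℝ → ℂ := fun k θ => c k * Complex.exp (-(Complex.I * (k:ℂ) * (θ:ℂ))) with hF
  have hFnorm : ∀ k θ, ‖F k θ‖ = ‖c k‖ := by
    intro k θ
    simp [hF, Complex.norm_exp]
  have hFcont : ∀ k, Continuous (F k) := by
    intro k
    exact continuous_const.mul (Complex.continuous_exp.comp (by continuity))
  set g : ℝ → ℂ := fun θ => ∑' k, F k θ with hg
  have hgcont : Continuous g :=
    continuous_tsum hFcont hc (fun k θ => le_of_eq (hFnorm k θ))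
  set T : ℤ × ℤ → ℝ → ℂ := fun p θ => F p.1 θ * (starRingEnd ℂ) (F p.2 θ) with hT
  have hTcont : ∀ p, Continuous (T p) := fun p =>
    (hFcont p.1).mul (Complex.continuous_conj.comp (hFcont p.2))
  have hTint : ∀ p, Integrable (T p) (volume.restrict (Set.Ioc (0:ℝ) (2*π))) := fun p =>
    (hTcont p).integrableOn_Ioc
  have hTnorm : ∀ (p : ℤ × ℤ) θ, ‖T p θ‖ = ‖c p.1‖ * ‖c p.2‖ := by
    intro p θ
    simp [hT, hFnorm]
  have hTintnorm : ∀ p : ℤ × ℤ,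
      (∫ θ in Set.Ioc (0:ℝ) (2*π), ‖T p θ‖) = ‖c p.1‖ * ‖c p.2‖ * (2*π) := by
    intro p
    simp only [hTnorm]
    rw [setIntegral_const]
    simp [Real.volume_Ioc, ENNReal.toReal_ofReal h0]
    rw [max_eq_left (by positivity)]
    ring
  have hsum2 : Summable fun p : ℤ × ℤ => ∫ θ in Set.Ioc (0:ℝ) (2*π), ‖T p θ‖ := by
    simp only [hTintnorm]
    exact (hc.mul_of_nonneg hc (fun _ => norm_nonneg _) (fun _ => norm_nonneg _)).mul_right _
  have key := integral_tsum_of_summable_integral_norm hTint hsum2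
  have hexp : ∀ θ : ℝ, g θ * (starRingEnd ℂ) (g θ) = ∑' p : ℤ × ℤ, T p θ := by
    intro θ
    have h1 : (starRingEnd ℂ) (g θ) = ∑' k, (starRingEnd ℂ) (F k θ) := by
      simp only [hg, starRingEnd_apply]
      exact tsum_star
    rw [h1]
    exact tsum_mul_tsum_of_summable_norm
      (by simpa only [hFnorm] using hc)
      (by simpa only [RCLike.norm_conj, hFnorm] using hc)
  have hnormsq : ∀ z : ℂ, ‖z‖^2 = (z * (starRingEnd ℂ) z).re := by
    intro z
    rw [Complex.mul_conj]
    simp [Complex.normSq_eq_norm_sq, ← Complex.ofReal_pow]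
  have hGint : Integrable (fun θ => g θ * (starRingEnd ℂ) (g θ))
      (volume.restrict (Set.Ioc (0:ℝ) (2*π))) :=
    (hgcont.mul (Complex.continuous_conj.comp hgcont)).integrableOn_Ioc
  have hTval : ∀ p : ℤ × ℤ,
      (∫ θ in Set.Ioc (0:ℝ) (2*π), T p θ)
        = c p.1 * (starRingEnd ℂ) (c p.2) * (if p.2 = p.1 then ((2*π:ℝ):ℂ) else 0) := by
    intro p
    have hconjexp : ∀ θ : ℝ, (starRingEnd ℂ) (Complex.exp (-(Complex.I * (p.2:ℂ) * (θ:ℂ)))) =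
        Complex.exp (Complex.I * (p.2:ℂ) * (θ:ℂ)) := by
      intro θ
      rw [← Complex.exp_conj]
      congr 1
      simp
    have hTeq : ∀ θ : ℝ, T p θ = (c p.1 * (starRingEnd ℂ) (c p.2)) *
        Complex.exp (Complex.I * ((p.2 - p.1 : ℤ):ℂ) * (θ:ℂ)) := by
      intro θ
      calc T p θ = c p.1 * Complex.exp (-(Complex.I * (p.1:ℂ) * (θ:ℂ))) *
            ((starRingEnd ℂ) (c p.2) * Complex.exp (Complex.I * (p.2:ℂ) * (θ:ℂ))) := by
            simp only [hT, hF, map_mul, hconjexp]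
        _ = (c p.1 * (starRingEnd ℂ) (c p.2)) *
            Complex.exp (-(Complex.I * (p.1:ℂ) * (θ:ℂ)) + Complex.I * (p.2:ℂ) * (θ:ℂ)) := by
            rw [Complex.exp_add]; ring
        _ = _ := by
            rw [show -(Complex.I * (p.1:ℂ) * (θ:ℂ)) + Complex.I * (p.2:ℂ) * (θ:ℂ)
              = Complex.I * ((p.2 - p.1 : ℤ):ℂ) * (θ:ℂ) by push_cast; ring]
    simp only [hTeq]
    rw [integral_const_mul, ← intervalIntegral.integral_of_le h0, orth_aux]
    congr 1
    simp [sub_eq_zero]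
  calc (∫ θ in (0:ℝ)..(2*π), ‖g θ‖^2)
      = ∫ θ in Set.Ioc (0:ℝ) (2*π), ‖g θ‖^2 := intervalIntegral.integral_of_le h0
    _ = ∫ θ in Set.Ioc (0:ℝ) (2*π), (g θ * (starRingEnd ℂ) (g θ)).re := by
        simp only [hnormsq]
    _ = (∫ θ in Set.Ioc (0:ℝ) (2*π), g θ * (starRingEnd ℂ) (g θ)).re := by
        simpa using integral_re hGint
    _ = (∑' p : ℤ × ℤ, ∫ θ in Set.Ioc (0:ℝ) (2*π), T p θ).re := by
        rw [show (fun θ => g θ * (starRingEnd ℂ) (g θ)) = fun θ => ∑' p : ℤ × ℤ, T p θ from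
          funext hexp, ← key]
    _ = 2*π * ∑' k : ℤ, ‖c k‖^2 := by
        simp only [hTval]
        rw [← Function.Injective.tsum_eq (g := fun m : ℤ => ((m, m) : ℤ × ℤ))
          (fun a b h => by simpa using congrArg Prod.fst h) ?hsupp]
        case hsupp =>
          intro p hp
          rcases eq_or_ne p.2 p.1 with h | h
          · exact ⟨p.1, by simp [Prod.ext_iff, h]⟩
          · exfalso; apply hp; simp [h]
        simp only [if_pos rfl, eq_self_iff_true, if_true, Complex.mul_conj]
        have hre : (∑' m : ℤ, (↑(Complex.normSq (c m)) * ((2*π:ℝ):ℂ))) =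
            ((∑' m : ℤ, Complex.normSq (c m) * (2*π) : ℝ) : ℂ) := by
          rw [Complex.ofReal_tsum]
          push_cast
          ring_nf
        rw [hre]
        rw [Complex.ofReal_re, tsum_mul_right]
        simp only [Complex.normSq_eq_norm_sq]
        ring




/-- The SAFT Zak transform of `f : ℝ → ℂ`, with `Ω = 2*(b*q - d*p)`. -/
noncomputable def saftZak (a b d p q : ℝ) (f : ℝ → ℂ) (t ω : ℝ) : ℂ :=
  (Real.sqrt (2 * π * b) : ℂ)⁻¹ *
    ∑' k : ℤ, f (t + (k : ℝ)) * Complex.exp (Complex.I / (2 * b) *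
      ((d * ω ^ 2 + a * (k : ℝ) ^ 2 - 2 * (k : ℝ) * ω + 2 * (b * q - d * p) * ω
        + 2 * p * (k : ℝ) : ℝ) : ℂ))

/-- Fiberwise energy identity for the SAFT Zak transform, with `Δ = 2πb`. -/
theorem saftZak_fiber_energy (a b c d p q : ℝ) (hb : 0 < b) (habcd : a * d - b * c = 1)
    (f : ℝ → ℂ) (t : ℝ) (hf : Summable fun k : ℤ => ‖f (t + (k : ℝ))‖) :
    (∫ ω in (0:ℝ)..(2 * π * b), ‖saftZak a b d p q f t ω‖ ^ 2) =
      ∑' k : ℤ, ‖f (t + (k : ℝ))‖ ^ 2 := by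
  have hb' : (b:ℂ) ≠ 0 := by exact_mod_cast hb.ne'
  have hπb : (0:ℝ) < 2*π*b := by positivity
  set cc : ℤ → ℂ := fun k => f (t + (k:ℝ)) *
    Complex.exp ((((a*(k:ℝ)^2 + 2*p*(k:ℝ))/(2*b) : ℝ) : ℂ) * Complex.I) with hcc
  have hccnorm : ∀ k : ℤ, ‖cc k‖ = ‖f (t + (k:ℝ))‖ := by
    intro k
    simp only [hcc, norm_mul, Complex.norm_exp_ofReal_mul_I, mul_one]
  have hccsum : Summable fun k : ℤ => ‖cc k‖ := by simpa only [hccnorm] using hf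
  set H : ℝ → ℝ := fun θ => ‖∑' k : ℤ, cc k * Complex.exp (-(Complex.I * (k:ℂ) * (θ:ℂ)))‖^2
    with hH
  have key : ∀ ω : ℝ, ‖saftZak a b d p q f t ω‖^2 = (2*π*b)⁻¹ * H (ω/b) := by
    intro ω
    have hterm : ∀ k : ℤ, f (t + (k:ℝ)) * Complex.exp (Complex.I / (2 * b) *
        ((d * ω ^ 2 + a * (k : ℝ) ^ 2 - 2 * (k : ℝ) * ω + 2 * (b * q - d * p) * ω
          + 2 * p * (k : ℝ) : ℝ) : ℂ))
        = Complex.exp ((((d*ω^2 + 2*(b*q - d*p)*ω)/(2*b) : ℝ) : ℂ) * Complex.I) *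
          (cc k * Complex.exp (-(Complex.I * (k:ℂ) * ((ω/b : ℝ):ℂ)))) := by
      intro k
      have hsplit : Complex.I / (2 * (b:ℂ)) * ((d * ω ^ 2 + a * (k : ℝ) ^ 2 - 2 * (k : ℝ) * ω
            + 2 * (b * q - d * p) * ω + 2 * p * (k : ℝ) : ℝ) : ℂ)
          = (((d*ω^2 + 2*(b*q - d*p)*ω)/(2*b) : ℝ) : ℂ) * Complex.I
            + ((((a*(k:ℝ)^2 + 2*p*(k:ℝ))/(2*b) : ℝ) : ℂ) * Complex.I
            + -(Complex.I * (k:ℂ) * ((ω/b : ℝ):ℂ))) := by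
        push_cast
        field_simp
        ring
      rw [hsplit, Complex.exp_add, Complex.exp_add, hcc]
      ring
    rw [saftZak, tsum_congr hterm, tsum_mul_left]
    rw [norm_mul, norm_mul, mul_pow, mul_pow]
    have h1 : ‖((Real.sqrt (2*π*b) : ℝ) : ℂ)⁻¹‖^2 = (2*π*b)⁻¹ := by
      rw [norm_inv, Complex.norm_real, Real.norm_of_nonneg (Real.sqrt_nonneg _), inv_pow,
        Real.sq_sqrt hπb.le]
    have h2 : ‖Complex.exp ((((d*ω^2 + 2*(b*q - d*p)*ω)/(2*b) : ℝ) : ℂ) * Complex.I)‖ = 1 := by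
      simp only [Complex.norm_exp_ofReal_mul_I]
    rw [h1, h2, hH]
    ring
  calc (∫ ω in (0:ℝ)..(2*π*b), ‖saftZak a b d p q f t ω‖^2)
      = ∫ ω in (0:ℝ)..(2*π*b), (2*π*b)⁻¹ * H (ω/b) := by simp only [key]
    _ = (2*π*b)⁻¹ * ∫ ω in (0:ℝ)..(2*π*b), H (ω/b) := intervalIntegral.integral_const_mul _ _
    _ = (2*π*b)⁻¹ * (b * ∫ θ in (0:ℝ)..(2*π), H θ) := by
        rw [intervalIntegral.integral_comp_div (a := 0) (b := 2*π*b) H hb.ne']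
        rw [zero_div, mul_div_assoc, div_self hb.ne', mul_one]
        simp [smul_eq_mul]
    _ = (2*π*b)⁻¹ * (b * (2*π * ∑' k : ℤ, ‖cc k‖^2)) := by
        rw [hH, parseval_int cc hccsum]
    _ = ∑' k : ℤ, ‖f (t + (k:ℝ))‖^2 := by
        simp only [hccnorm]
        have hπ : (π:ℝ) ≠ 0 := Real.pi_ne_zero
        field_simp
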